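/- Let X = 𝕋² = (ℝ/ℤ)² and let σ be a topological measure on X which is invariant under all translations of X. Let k, l be coprime integers, φ(p,q) = l·p − k·q, let α ∈ (0,1), and let A = φ⁻¹(π([0, α])) be the closed linear annulus of slope (k,l) and area α. For a natural number N ≥ 1 set m_N = ⌊2Nα⌋ and suppose m_N ≥ 1. Then (m_N − 1)·(1/N − 1/(2N−1)) ≤ σ(A) ≤ 1 − (2N − 1 − m_N)·(1/N − 1/(2N−1)). -/

import Mathlib

/-- A topological measure (Aarnes) on a compact Hausdorff space `Z`. -/
structure IsTopMeasure {Z : Type*} [TopologicalSpace Z] (τ : Set Z → ℝ) : Prop where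
  mem_Icc : ∀ A : Set Z, IsOpen A ∨ IsClosed A → τ A ∈ Set.Icc (0 : ℝ) 1
  univ : τ Set.univ = 1
  compl_add : ∀ K : Set Z, IsCompact K → τ Kᶜ + τ K = 1
  add : ∀ K K' : Set Z, IsCompact K → IsCompact K' → Disjoint K K' →
      τ (K ∪ K') = τ K + τ K'
  mono : ∀ K K' : Set Z, IsCompact K → IsCompact K' → K ⊆ K' → τ K ≤ τ K'
  inner_reg : ∀ U : Set Z, IsOpen U →
      IsLUB {r : ℝ | ∃ K : Set Z, IsCompact K ∧ K ⊆ U ∧ τ K = r} (τ U)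

/-- The two-dimensional torus `𝕋² = (ℝ/ℤ)²`. -/
abbrev Torus2 := UnitAddCircle × UnitAddCircle

namespace AnnulusAux

noncomputable section

open Set

/-- The slope functional. -/
def phi (k l : ℤ) (x : Torus2) : UnitAddCircle := l • x.1 - k • x.2

/-- closed arc of the circle -/
def arc (c u : ℝ) : Set UnitAddCircle := ((↑) : ℝ → UnitAddCircle) '' Icc c (c + u)

/-- closed annulus -/
def ann (k l : ℤ) (c u : ℝ) : Set Torus2 := phi k l ⁻¹' arc c u

variable {k l : ℤ}

lemma phi_cont : Continuous (phi k l) := by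
  unfold phi
  fun_prop

lemma phi_add (x y : Torus2) : phi k l (x + y) = phi k l x + phi k l y := by
  simp only [phi, Prod.fst_add, Prod.snd_add, smul_add]
  abel

lemma coe_eq_coe_iff {x y : ℝ} :
    ((x : UnitAddCircle) = (y : UnitAddCircle)) ↔ ∃ n : ℤ, x - y = (n : ℝ) := by
  rw [show ((x : UnitAddCircle) = y) ↔ _ from QuotientAddGroup.eq_iff_sub_mem]
  constructor
  · rintro h
    rcases AddSubgroup.mem_zmultiples_iff.mp h with ⟨n, hn⟩
    exact ⟨n, by simpa [zsmul_eq_mul] using hn.symm⟩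
  · rintro ⟨n, hn⟩
    exact AddSubgroup.mem_zmultiples_iff.mpr ⟨n, by simp [zsmul_eq_mul, hn]⟩

lemma arc_compact (c u : ℝ) : IsCompact (arc c u) :=
  isCompact_Icc.image (AddCircle.continuous_mk' 1)

lemma arc_closed (c u : ℝ) : IsClosed (arc c u) := (arc_compact c u).isClosed

lemma ann_closed (c u : ℝ) : IsClosed (ann k l c u) :=
  (arc_closed c u).preimage phi_cont

lemma ann_compact (c u : ℝ) : IsCompact (ann k l c u) :=
  (ann_closed c u).isCompact

lemma arc_disjoint {a b c d : ℝ} (hab : a ≤ b) (hcd : c ≤ d)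
    (h1 : b < c) (h2 : d < a + 1) :
    Disjoint (((↑) : ℝ → UnitAddCircle) '' Icc a b) (((↑) : ℝ → UnitAddCircle) '' Icc c d) := by
  rw [Set.disjoint_left]
  rintro y ⟨z, hz, rfl⟩ ⟨w, hw, hwz⟩
  rcases coe_eq_coe_iff.mp hwz with ⟨n, hn⟩
  have hgt : (0 : ℝ) < (n : ℝ) := by
    rw [← hn]; have := hz.2; have := hw.1; linarith
  have hlt : (n : ℝ) < 1 := by
    rw [← hn]; have := hz.1; have := hw.2; linarith
  have h0 : (0 : ℤ) < n := by exact_mod_cast hgt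
  have h1' : n < 1 := by exact_mod_cast hlt
  omega

lemma ann_disjoint {a u c v : ℝ} (hu : 0 ≤ u) (hv : 0 ≤ v)
    (h1 : a + u < c) (h2 : c + v < a + 1) :
    Disjoint (ann k l a u) (ann k l c v) :=
  (arc_disjoint (by linarith) (by linarith) h1 (by linarith)).preimage _


lemma exists_shift (hkl : IsCoprime k l) (t : ℝ) :
    ∃ v : Torus2, phi k l v = (t : UnitAddCircle) := by
  rcases hkl with ⟨a, b, hab⟩
  refine ⟨(((b * t : ℝ) : UnitAddCircle), ((-(a * t) : ℝ) : UnitAddCircle)), ?_⟩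
  show l • ((b * t : ℝ) : UnitAddCircle) - k • ((-(a * t) : ℝ) : UnitAddCircle) = _
  have h1 : l • ((b * t : ℝ) : UnitAddCircle) = ((l * (b * t) : ℝ) : UnitAddCircle) := by
    rw [← AddCircle.coe_zsmul]; norm_num [zsmul_eq_mul]
  have h2 : k • ((-(a * t) : ℝ) : UnitAddCircle) = ((k * (-(a * t)) : ℝ) : UnitAddCircle) := by
    rw [← AddCircle.coe_zsmul]; norm_num [zsmul_eq_mul]
  rw [h1, h2, ← AddCircle.coe_sub]
  congr 1
  have : (a : ℝ) * k + b * l = 1 := by exact_mod_cast congrArg (Int.cast : ℤ → ℝ) hab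
  linear_combination t * this

lemma phi_sub (x y : Torus2) : phi k l (x - y) = phi k l x - phi k l y := by
  simp only [phi, Prod.fst_sub, Prod.snd_sub, smul_sub]
  abel

lemma arc_translate (p u : ℝ) :
    arc p u = (fun z => z + ((p : ℝ) : UnitAddCircle)) '' arc 0 u := by
  unfold arc
  rw [Set.image_image]
  have : ∀ x : ℝ, ((x : UnitAddCircle) + (p : UnitAddCircle)) = ((x + p : ℝ) : UnitAddCircle) := by
    intro x; rw [AddCircle.coe_add]
  simp_rw [this]
  rw [← Set.image_image (fun x : ℝ => ((x : UnitAddCircle))) (fun x => x + p),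
    Set.image_add_const_Icc]
  norm_num [add_comm]

lemma ann_translate (hkl : IsCoprime k l) (p u : ℝ) :
    ∃ v : Torus2, ann k l p u = (fun x => x + v) '' ann k l 0 u := by
  obtain ⟨v, hv⟩ := exists_shift hkl p
  refine ⟨v, ?_⟩
  ext x
  have himg : x ∈ (fun x => x + v) '' ann k l 0 u ↔ x - v ∈ ann k l 0 u := by
    constructor
    · rintro ⟨y, hy, rfl⟩; simpa using hy
    · intro h; exact ⟨x - v, h, by simp⟩
  rw [himg]
  show (phi k l x ∈ arc p u) ↔ (phi k l (x - v) ∈ arc 0 u)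
  rw [phi_sub, hv, arc_translate p u]
  constructor
  · rintro ⟨z, hz, hze⟩
    exact hze ▸ (by simpa using hz)
  · intro h
    exact ⟨phi k l x - (p : UnitAddCircle), h, sub_add_cancel _ _⟩

section withMeasure

variable (σ : Set Torus2 → ℝ) (hσ : IsTopMeasure σ)
  (hinv : ∀ v : Torus2, ∀ A : Set Torus2, IsOpen A ∨ IsClosed A →
      σ ((fun x => x + v) '' A) = σ A)
  (hkl : IsCoprime k l)

include hσ

lemma sigma_empty : σ ∅ = 0 := by
  have h := hσ.compl_add Set.univ isCompact_univ
  rw [Set.compl_univ, hσ.univ] at h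
  linarith

include hinv hkl in
lemma sigma_ann_translate (p u : ℝ) : σ (ann k l p u) = σ (ann k l 0 u) := by
  obtain ⟨v, hv⟩ := ann_translate hkl p u
  rw [hv, hinv v _ (Or.inr (ann_closed 0 u))]

/-- covering inequality for two compact sets -/
lemma cover_ineq (K K' : Set Torus2) (hK : IsCompact K) (hK' : IsCompact K')
    (hcov : Set.univ ⊆ K ∪ K') : 1 ≤ σ K + σ K' := by
  have hc := hσ.compl_add K hK
  have hlub := hσ.inner_reg Kᶜ hK.isClosed.isOpen_compl
  have hub : σ Kᶜ ≤ σ K' := by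
    apply hlub.2
    rintro r ⟨C, hC, hCsub, rfl⟩
    refine hσ.mono C K' hC hK' ?_
    intro x hx
    rcases hcov (Set.mem_univ x) with h | h
    · exact absurd h (hCsub hx)
    · exact h
  linarith

/-- complement bound : a compact set inside the complement of a closed set -/
lemma compl_bound (A C : Set Torus2) (hA : IsCompact A) (hC : IsCompact C)
    (hdisj : Disjoint A C) : σ A ≤ 1 - σ C := by
  have hc := hσ.compl_add A hA
  have hlub := hσ.inner_reg Aᶜ hA.isClosed.isOpen_compl
  have : σ C ≤ σ Aᶜ := hlub.1 ⟨C, hC, (Set.disjoint_left.mp hdisj.symm : _), rfl⟩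
  linarith


/-- union of c disjoint annuli of width u, step δ, starting at p -/
def W (k l : ℤ) (p δ u : ℝ) (c : ℕ) : Set Torus2 :=
  ⋃ i ∈ Finset.range c, ann k l (p + i * δ) u

omit hσ in
lemma W_zero (p δ u : ℝ) : W k l p δ u 0 = ∅ := by simp [W]

omit hσ in
lemma W_succ (p δ u : ℝ) (c : ℕ) :
    W k l p δ u (c + 1) = ann k l (p + c * δ) u ∪ W k l p δ u c := by
  unfold W
  rw [Finset.range_add_one, Finset.set_biUnion_insert]

include hinv hkl in
lemma W_spec (p δ u : ℝ) (hu : 0 < u) (hud : u < δ) (c : ℕ)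
    (hspan : ((c : ℝ) - 1) * δ + u < 1) :
    IsCompact (W k l p δ u c) ∧ σ (W k l p δ u c) = c * σ (ann k l 0 u) := by
  have hδ : 0 < δ := lt_trans hu hud
  induction c with
  | zero => simpa [W_zero, sigma_empty σ hσ] using isCompact_empty
  | succ c ih =>
    have hspan' : ((c : ℝ) - 1) * δ + u < 1 := by
      have : ((c : ℝ)) ≤ ((c : ℝ) + 1) := by linarith
      push_cast at hspan ⊢
      nlinarith
    obtain ⟨ihK, ihσ⟩ := ih hspan'
    have hdisj : Disjoint (ann k l (p + c * δ) u) (W k l p δ u c) := by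
      rw [Set.disjoint_right]
      intro x hx
      simp only [W, Set.mem_iUnion, Finset.mem_range] at hx
      obtain ⟨i, hi, hxi⟩ := hx
      have hdij : Disjoint (ann k l (p + i * δ) u) (ann k l (p + c * δ) u) := by
        apply ann_disjoint (le_of_lt hu) (le_of_lt hu)
        · have : (i : ℝ) + 1 ≤ c := by exact_mod_cast hi
          nlinarith
        · have h0i : (0:ℝ) ≤ i := Nat.cast_nonneg i
          push_cast at hspan
          nlinarith
      exact Set.disjoint_left.mp hdij hxi
    constructor
    · rw [W_succ]
      exact (ann_compact _ _).union ihK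
    · rw [W_succ, hσ.add _ _ (ann_compact _ _) ihK hdisj, ihσ,
        sigma_ann_translate σ hσ hinv hkl]
      push_cast
      ring

set_option maxHeartbeats 2000000 in
include hinv hkl in
lemma lower_bound (w : ℝ) (hw0 : 0 < w) (hw1 : w < 1) (s n : ℕ) (hn : 0 < n)
    (hcond : (n : ℝ) * (1 - w) < 2 * s + 1) :
    1 - (2 * (s : ℝ) + 1) / n ≤ σ (ann k l 0 w) := by
  have hrpos : (0:ℝ) < 2 * (s:ℝ) + 1 := by positivity
  set d : ℝ := (1 - w) / (2 * (s:ℝ) + 1) with hd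
  have hdpos : 0 < d := by
    apply div_pos; linarith; exact hrpos
  have hrd : (2 * (s:ℝ) + 1) * d = 1 - w := by
    rw [hd]; field_simp
  -- choose u
  have hdn : d < 1 / n := by
    rw [hd, div_lt_div_iff₀ hrpos (by exact_mod_cast hn)]
    calc (1 - w) * n = (n:ℝ) * (1 - w) := by ring
    _ < (2 * s + 1) * 1 := by linarith
    _ = 1 * (2 * s + 1) := by ring
  obtain ⟨u, hu1, hu2⟩ := exists_between (lt_min hdn (lt_min (by linarith : d < 2 * d)
      (by linarith : d < w + d)))
  have hun : u < 1 / n := lt_of_lt_of_le hu2 (min_le_left _ _)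
  have hu2d : u < 2 * d := lt_of_lt_of_le hu2 (le_trans (min_le_right _ _) (min_le_left _ _))
  have huwd : u < w + d := lt_of_lt_of_le hu2 (le_trans (min_le_right _ _) (min_le_right _ _))
  have hu0 : 0 < u := lt_trans hdpos hu1
  -- PACK: σ(ann 0 u) ≤ 1/n
  have hpack : σ (ann k l 0 u) ≤ 1 / n := by
    have hn' : (0:ℝ) < n := by exact_mod_cast hn
    have hun' : u * n < 1 := (lt_div_iff₀ hn').mp hun
    obtain ⟨hWc, hWσ⟩ := W_spec σ hσ hinv hkl 0 (1/n) u hu0 hun n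
      (by
        have h2 : (((n:ℕ):ℝ) - 1) * (1/(n:ℝ)) = 1 - 1/n := by field_simp
        rw [h2]
        have : u < 1/(n:ℝ) := hun
        linarith)
    have := (hσ.mem_Icc _ (Or.inr hWc.isClosed)).2
    rw [hWσ] at this
    rw [le_div_iff₀ hn']
    nlinarith
  -- cover classes
  have hspan2 : (((s + 1 : ℕ) : ℝ) - 1) * (2 * d) + u < 1 := by
    push_cast; nlinarith
  have hspan1 : (((s : ℕ) : ℝ) - 1) * (2 * d) + u < 1 := by
    push_cast; nlinarith
  obtain ⟨hK2c, hK2σ⟩ := W_spec σ hσ hinv hkl w (2*d) u hu0 hu2d (s+1) hspan2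
  obtain ⟨hK1c, hK1σ⟩ := W_spec σ hσ hinv hkl (w+d) (2*d) u hu0 hu2d s hspan1
  -- A disjoint from W₁
  have hAdisj : Disjoint (ann k l 0 w) (W k l (w+d) (2*d) u s) := by
    rw [Set.disjoint_right]
    intro x hx
    simp only [W, Set.mem_iUnion, Finset.mem_range] at hx
    obtain ⟨i, hi, hxi⟩ := hx
    have : Disjoint (ann k l 0 w) (ann k l (w + d + i * (2*d)) u) := by
      apply ann_disjoint (le_of_lt hw0) (le_of_lt hu0)
      · have : (0:ℝ) ≤ i := Nat.cast_nonneg i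
        nlinarith
      · have : (i:ℝ) + 1 ≤ s := by exact_mod_cast hi
        nlinarith
    exact fun hxA => (Set.disjoint_left.mp this hxA) hxi
  set K : Set Torus2 := ann k l 0 w ∪ W k l (w+d) (2*d) u s with hK
  have hKc : IsCompact K := (ann_compact _ _).union hK1c
  have hKσ : σ K = σ (ann k l 0 w) + s * σ (ann k l 0 u) := by
    rw [hK, hσ.add _ _ (ann_compact _ _) hK1c hAdisj, hK1σ]
  -- covering
  have hcov : Set.univ ⊆ K ∪ W k l w (2*d) u (s+1) := by
    intro x _
    have hx1 : phi k l x ∈ arc 0 1 := by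
      have harc : arc 0 1 = Set.univ := by
        exact AddCircle.coe_image_Icc_eq (1:ℝ) 0
      rw [harc]; trivial
    obtain ⟨z, hz, hze⟩ := hx1
    rw [zero_add] at hz
    -- real covering
    by_cases hzw : z ≤ w
    · left; left
      exact ⟨z, ⟨hz.1, by rwa [zero_add]⟩, hze⟩
    · push_neg at hzw
      -- find arc index j < 2s+1 with w + j*d ≤ z ≤ w + j*d + u
      have hzw' : 0 ≤ (z - w) / d := by
        apply div_nonneg; linarith; linarith
      set j : ℕ := min (2*s) ⌊(z - w)/d⌋₊ with hj
      have hjle : (j : ℝ) * d ≤ z - w := by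
        have h1 : (j : ℝ) ≤ (z - w) / d := by
          have h2 : j ≤ ⌊(z - w)/d⌋₊ := min_le_right _ _
          calc (j : ℝ) ≤ (⌊(z - w)/d⌋₊ : ℝ) := by exact_mod_cast h2
          _ ≤ (z - w)/d := Nat.floor_le hzw'
        have h2 := mul_le_mul_of_nonneg_right h1 (le_of_lt hdpos)
        rwa [div_mul_cancel₀ _ (ne_of_gt hdpos)] at h2
      have hjge : z ≤ w + j * d + u := by
        rcases le_total (⌊(z - w)/d⌋₊) (2*s) with hc | hc
        · have hjf : j = ⌊(z - w)/d⌋₊ := min_eq_right hc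
          have h3 : (z - w)/d < (j : ℝ) + 1 := by
            rw [hjf]; exact_mod_cast Nat.lt_floor_add_one ((z - w)/d)
          have h4 : z - w < ((j : ℝ) + 1) * d := by
            have h4' := mul_lt_mul_of_pos_right h3 hdpos
            rwa [div_mul_cancel₀ _ (ne_of_gt hdpos)] at h4'
          have hexp : ((j : ℝ) + 1) * d = (j : ℝ) * d + d := by ring
          linarith
        · have hjf : j = 2*s := min_eq_left hc
          have h5 : z ≤ 1 := hz.2
          have hjr : (j : ℝ) * d = 2 * (s:ℝ) * d := by rw [hjf]; push_cast; ring
          linarith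
      have hjlt : j < 2*s + 1 := by
        rw [hj]; omega
      -- split parity
      have hmem : phi k l x ∈ arc (w + j * d) u := ⟨z, ⟨by linarith, by linarith⟩, hze⟩
      rcases Nat.even_or_odd j with ⟨i, hi⟩ | ⟨i, hi⟩
      · right
        simp only [W, Set.mem_iUnion, Finset.mem_range]
        refine ⟨i, by omega, ?_⟩
        show phi k l x ∈ arc (w + i * (2*d)) u
        have : w + (i:ℝ) * (2*d) = w + j * d := by
          rw [hi]; push_cast; ring
        rwa [this]
      · left; right
        simp only [W, Set.mem_iUnion, Finset.mem_range]
        refine ⟨i, by omega, ?_⟩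
        show phi k l x ∈ arc (w + d + i * (2*d)) u
        have : w + d + (i:ℝ) * (2*d) = w + j * d := by
          rw [hi]; push_cast; ring
        rwa [this]
  have hmain := cover_ineq σ hσ K _ hKc hK2c hcov
  rw [hKσ, hK2σ] at hmain
  have hfin : σ (ann k l 0 w) + (2 * (s:ℝ) + 1) * σ (ann k l 0 u) ≥ 1 := by
    push_cast at hmain
    nlinarith
  have hannl : 0 ≤ σ (ann k l 0 u) := (hσ.mem_Icc _ (Or.inr (ann_closed 0 u))).1
  have hstep : (2*(s:ℝ)+1) * σ (ann k l 0 u) ≤ (2*(s:ℝ)+1) * (1/n) :=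
    mul_le_mul_of_nonneg_left hpack (by positivity)
  have hdiv : (2*(s:ℝ)+1) * (1/n) = (2*(s:ℝ)+1)/n := by ring
  linarith

set_option maxHeartbeats 2000000 in
include hinv hkl in
lemma upper_via_compl (w β : ℝ) (hw0 : 0 < w) (hβα : w < β) (hβ1 : β < 1)
    (s n : ℕ) (hn : 0 < n) (hcond : (n : ℝ) * β < 2 * s + 1) :
    σ (ann k l 0 w) ≤ (2 * (s : ℝ) + 1) / n := by
  set u : ℝ := 1 - β with hu
  have hu0 : 0 < u := by rw [hu]; linarith
  have hu1 : u < 1 - w := by rw [hu]; linarith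
  set p : ℝ := w + (1 - w - u)/2 with hp
  have hdisj : Disjoint (ann k l 0 w) (ann k l p u) := by
    apply ann_disjoint (le_of_lt hw0) (le_of_lt hu0)
    · rw [hp]; linarith
    · rw [hp]; linarith
  have h1 : σ (ann k l 0 w) ≤ 1 - σ (ann k l p u) :=
    compl_bound σ hσ _ _ (ann_compact _ _) (ann_compact _ _) hdisj
  rw [sigma_ann_translate σ hσ hinv hkl p u] at h1
  have h2 : 1 - (2 * (s : ℝ) + 1) / n ≤ σ (ann k l 0 u) := by
    apply lower_bound σ hσ hinv hkl u hu0 (by linarith) s n hn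
    have : 1 - u = β := by rw [hu]; ring
    rw [this]; exact hcond
  linarith

end withMeasure

end

end AnnulusAux


open AnnulusAux in
set_option maxHeartbeats 2000000 in
/-- Two-sided bounds on the value of a translation-invariant topological measure on a
closed linear annulus `A` of area `α`, in terms of `m_N = ⌊2Nα⌋`. -/
theorem topMeasure_annulus_bounds (σ : Set Torus2 → ℝ) (hσ : IsTopMeasure σ)
    (hinv : ∀ v : Torus2, ∀ A : Set Torus2, IsOpen A ∨ IsClosed A →
      σ ((fun x => x + v) '' A) = σ A)
    (k l : ℤ) (hkl : IsCoprime k l) (α : ℝ) (hα : α ∈ Set.Ioo (0 : ℝ) 1)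
    (N : ℕ) (hN : 1 ≤ N) (mN : ℤ) (hmN : mN = ⌊2 * (N : ℝ) * α⌋) (hmN1 : 1 ≤ mN) :
    ((mN : ℝ) - 1) * (1 / (N : ℝ) - 1 / (2 * (N : ℝ) - 1)) ≤
      σ ((fun x : Torus2 => l • x.1 - k • x.2) ⁻¹'
        (((↑) : ℝ → UnitAddCircle) '' Set.Icc (0 : ℝ) α)) ∧
    σ ((fun x : Torus2 => l • x.1 - k • x.2) ⁻¹'
        (((↑) : ℝ → UnitAddCircle) '' Set.Icc (0 : ℝ) α)) ≤
      1 - (2 * (N : ℝ) - 1 - (mN : ℝ)) * (1 / (N : ℝ) - 1 / (2 * (N : ℝ) - 1)) := by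
  obtain ⟨hα0, hα1⟩ := hα
  have hsetA : ((fun x : Torus2 => l • x.1 - k • x.2) ⁻¹'
      (((↑) : ℝ → UnitAddCircle) '' Set.Icc (0 : ℝ) α)) = ann k l 0 α := by
    unfold ann arc phi
    rw [zero_add]
  rw [hsetA]
  have hNR : (1 : ℝ) ≤ N := by exact_mod_cast hN
  -- basic floor facts
  have hfl : (mN : ℝ) ≤ 2 * N * α := by rw [hmN]; exact Int.floor_le _
  have hfu : 2 * N * α < (mN : ℝ) + 1 := by rw [hmN]; exact Int.lt_floor_add_one _
  have hm_up : mN ≤ 2 * (N : ℤ) - 1 := by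
    have h2 : mN < 2 * (N : ℤ) := by
      rw [hmN]
      apply Int.floor_lt.mpr
      push_cast
      nlinarith
    omega
  have hm_upR : (mN : ℝ) ≤ 2 * (N : ℝ) - 1 := by exact_mod_cast hm_up
  have hmN1R : (1 : ℝ) ≤ (mN : ℝ) := by exact_mod_cast hmN1
  have hAmem := hσ.mem_Icc (ann k l 0 α) (Or.inr (ann_closed 0 α))
  rcases eq_or_lt_of_le hN with hN1 | hN2
  · -- N = 1
    have hNR1 : (N : ℝ) = 1 := by exact_mod_cast hN1.symm
    have hg : 1 / (N : ℝ) - 1 / (2 * (N : ℝ) - 1) = 0 := by rw [hNR1]; norm_num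
    rw [hg]
    constructor
    · simpa using hAmem.1
    · simpa using hAmem.2
  · -- N ≥ 2
    have hNR2 : (2 : ℝ) ≤ N := by exact_mod_cast hN2
    set n : ℕ := 2 * N * (2 * N - 1) with hn
    have hn_pos : 0 < n := by
      have h1 : 0 < 2 * N := by omega
      have h2 : 0 < 2 * N - 1 := by omega
      exact Nat.mul_pos h1 h2
    have hnR : ((n : ℕ) : ℝ) = 2 * (N : ℝ) * (2 * (N : ℝ) - 1) := by
      rw [hn]
      push_cast [Nat.cast_sub (by omega : 1 ≤ 2 * N)]
      ring
    have hnRpos : (0 : ℝ) < (n : ℝ) := by exact_mod_cast hn_pos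
    have hNpos : (0 : ℝ) < (N : ℝ) := by linarith
    have h2N1pos : (0 : ℝ) < 2 * (N : ℝ) - 1 := by linarith
    constructor
    · -- LOWER BOUND
      have hS0 : 0 ≤ (N : ℤ) * (2 * N - 1) - (mN - 1) * ((N : ℤ) - 1) - 1 := by
        have hNZ : (2 : ℤ) ≤ (N : ℤ) := by exact_mod_cast hN2
        nlinarith [mul_le_mul_of_nonneg_right (show mN - 1 ≤ 2 * (N:ℤ) - 2 by omega)
          (show (0:ℤ) ≤ (N : ℤ) - 1 by omega)]
      obtain ⟨s₁, hs₁Z⟩ : ∃ s : ℕ, ((s : ℕ) : ℤ) =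
          (N : ℤ) * (2 * N - 1) - (mN - 1) * ((N : ℤ) - 1) - 1 :=
        ⟨_, Int.toNat_of_nonneg hS0⟩
      have hs₁R : ((s₁ : ℕ) : ℝ) = (N : ℝ) * (2 * N - 1) - ((mN : ℝ) - 1) * ((N : ℝ) - 1) - 1 := by
        have := congrArg (Int.cast : ℤ → ℝ) hs₁Z
        push_cast at this
        linarith [this]
      have hcond : (n : ℝ) * (1 - α) < 2 * s₁ + 1 := by
        rw [hnR, hs₁R]
        nlinarith [hfl, hm_upR, hmN1R, hNR2]
      have hlb := lower_bound σ hσ hinv hkl α hα0 hα1 s₁ n hn_pos hcond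
      have hDdef : 1 - ((mN : ℝ) - 1) * (1 / (N : ℝ) - 1 / (2 * (N : ℝ) - 1)) =
          2 * ((N : ℝ) * (2 * N - 1) - ((mN : ℝ) - 1) * ((N : ℝ) - 1)) / n := by
        rw [hnR]
        have h2N1ne : (2 * (N : ℝ) - 1) ≠ 0 := h2N1pos.ne'
        have hNne : (N : ℝ) ≠ 0 := hNpos.ne'
        rw [eq_div_iff (by positivity)]
        have hsub : 1 / (N : ℝ) - 1 / (2 * (N : ℝ) - 1) = ((N : ℝ) - 1) / ((N : ℝ) * (2 * N - 1)) := by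
          rw [div_sub_div _ _ hNne h2N1ne]; congr 1; ring
        rw [hsub]
        have e : ((N : ℝ) - 1) / ((N : ℝ) * (2 * N - 1)) * (2 * N * (2 * N - 1)) = 2 * ((N : ℝ) - 1) := by
          rw [div_mul_eq_mul_div, div_eq_iff (mul_ne_zero hNne h2N1ne)]; ring
        linear_combination (-((mN : ℝ) - 1)) * e
      have hfinal : (2 * (s₁ : ℝ) + 1) / n ≤
          1 - ((mN : ℝ) - 1) * (1 / (N : ℝ) - 1 / (2 * (N : ℝ) - 1)) := by
        rw [hDdef]
        gcongr
        linarith [hs₁R]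
      linarith
    · -- UPPER BOUND
      rcases eq_or_lt_of_le hm_up with hmeq | hmlt
      · have : 2 * (N : ℝ) - 1 - (mN : ℝ) = 0 := by
          have : (mN : ℝ) = 2 * (N : ℝ) - 1 := by exact_mod_cast hmeq
          linarith
        rw [this]
        simpa using hAmem.2
      · -- mN ≤ 2N - 2
        have hj1 : mN ≤ 2 * (N : ℤ) - 2 := by omega
        have hj1R : (mN : ℝ) ≤ 2 * (N : ℝ) - 2 := by exact_mod_cast hj1
        have hS'0 : 0 ≤ (N : ℤ) * (2 * N - 1) - (2 * N - 1 - mN) * ((N : ℤ) - 1) - 1 := by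
          have hNZ : (2 : ℤ) ≤ (N : ℤ) := by exact_mod_cast hN2
          nlinarith [mul_le_mul_of_nonneg_right
            (show 2 * (N:ℤ) - 1 - mN ≤ 2 * (N:ℤ) - 2 by omega)
            (show (0:ℤ) ≤ (N : ℤ) - 1 by omega)]
        obtain ⟨s₂, hs₂Z⟩ : ∃ s : ℕ, ((s : ℕ) : ℤ) =
            (N : ℤ) * (2 * N - 1) - (2 * N - 1 - mN) * ((N : ℤ) - 1) - 1 :=
          ⟨_, Int.toNat_of_nonneg hS'0⟩
        have hs₂R : ((s₂ : ℕ) : ℝ) =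
            (N : ℝ) * (2 * N - 1) - (2 * (N:ℝ) - 1 - (mN : ℝ)) * ((N : ℝ) - 1) - 1 := by
          have := congrArg (Int.cast : ℤ → ℝ) hs₂Z
          push_cast at this
          linarith [this]
        have hαn : (n : ℝ) * α < 2 * s₂ + 1 := by
          rw [hnR, hs₂R]
          nlinarith [hfu, hj1R, hNR2]
        have hαdiv : α < (2 * (s₂ : ℝ) + 1) / n := by
          rw [lt_div_iff₀ hnRpos]
          linarith [hαn]
        obtain ⟨β, hβ1, hβ2⟩ := exists_between (lt_min hαdiv hα1)
        have hβmin1 := lt_of_lt_of_le hβ2 (min_le_left _ _)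
        have hβmin2 := lt_of_lt_of_le hβ2 (min_le_right _ _)
        have hβn : β * (n:ℝ) < 2 * (s₂:ℝ) + 1 := by
          have hh := mul_lt_mul_of_pos_right hβmin1 hnRpos
          rwa [div_mul_cancel₀ _ (ne_of_gt hnRpos)] at hh
        have hub := upper_via_compl σ hσ hinv hkl α β hα0 hβ1 hβmin2 s₂ n hn_pos
          (by rw [mul_comm]; exact hβn)
        have hDdef : 1 - (2 * (N : ℝ) - 1 - (mN : ℝ)) * (1 / (N : ℝ) - 1 / (2 * (N : ℝ) - 1)) =
            2 * ((N : ℝ) * (2 * N - 1) - (2 * (N:ℝ) - 1 - (mN : ℝ)) * ((N : ℝ) - 1)) / n := by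
          rw [hnR]
          field_simp
          ring
        have hfinal : (2 * (s₂ : ℝ) + 1) / n ≤
            1 - (2 * (N : ℝ) - 1 - (mN : ℝ)) * (1 / (N : ℝ) - 1 / (2 * (N : ℝ) - 1)) := by
          rw [hDdef]
          gcongr
          linarith [hs₂R]
        linarith
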